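/- Let t > 0, let m ≥ 0 be an integer, and let 0 < ε < A < π. Let G(z) = e^{−z²/(4t)} and let L̃^m G denote the m-fold application of the operator (L̃g)(z) = −(1/(2π))·g′(z)/sin z to G (a holomorphic function on ℂ ∖ πℤ). Then there exists a constant C > 0 such that for all z in the region S_{ε,A} = { z ∈ ℂ : Re z > 0, |Im z| < A, and |z − kπ| > ε for every positive integer k }, one has |(L̃^m G)(z)| ≤ C·(1 + |z|)^m · e^{−Re(z²)/(4t)}. -/

import Mathlib

set_option maxHeartbeats 1000000

open Complex Metric Set Filter

/-- The operator `L̃` acting on functions of a complex variable: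
`(L̃ g)(z) = -(1/(2π)) g'(z)/sin z`. -/
noncomputable def LsphC (g : ℂ → ℂ) : ℂ → ℂ :=
  fun z => -(1 / (2 * (Real.pi : ℂ))) * deriv g z / Complex.sin z

namespace Stmt6Aux

/-- The set of nonzero integer multiples of π in ℂ. -/
def polesC : Set ℂ := {w | ∃ k : ℤ, k ≠ 0 ∧ w = (k : ℂ) * (Real.pi : ℂ)}

/-- The region used in the induction. -/
def OmC (a e : ℝ) : Set ℂ := {z | |z.im| < a ∧ e < Metric.infDist z polesC}

lemma abs_pole {k : ℤ} (hk : k ≠ 0) :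
    Real.pi ≤ ‖(k : ℂ) * (Real.pi : ℂ)‖ := by
  have h1 : ((k : ℂ) * (Real.pi : ℂ)) = (((k : ℝ) * Real.pi : ℝ) : ℂ) := by push_cast; ring
  rw [h1, Complex.norm_real, Real.norm_eq_abs, abs_mul, abs_of_pos Real.pi_pos]
  have : (1 : ℝ) ≤ |(k : ℝ)| := by
    rw [← Int.cast_abs]
    exact_mod_cast Int.one_le_abs hk
  nlinarith [Real.pi_pos]

lemma polesC_nonempty : polesC.Nonempty :=
  ⟨(1 : ℂ) * (Real.pi : ℂ), 1, one_ne_zero, by norm_num⟩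

lemma le_infDist_polesC (z : ℂ) (c : ℝ)
    (hc : ∀ k : ℤ, k ≠ 0 → c ≤ ‖z - (k : ℂ) * (Real.pi : ℂ)‖) :
    c ≤ Metric.infDist z polesC := by
  by_contra h
  push_neg at h
  rw [Metric.infDist_lt_iff polesC_nonempty] at h
  obtain ⟨y, ⟨k, hk, rfl⟩, hy⟩ := h
  rw [Complex.dist_eq] at hy
  exact absurd (hc k hk) (by linarith)

lemma isOpen_OmC (a e : ℝ) : IsOpen (OmC a e) := by
  have h1 : IsOpen {z : ℂ | |z.im| < a} :=
    isOpen_lt (continuous_abs.comp Complex.continuous_im) continuous_const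
  have h2 : IsOpen {z : ℂ | e < Metric.infDist z polesC} :=
    isOpen_lt continuous_const (Metric.continuous_infDist_pt polesC)
  exact h1.inter h2

lemma mem_OmC_dist {a e : ℝ} {z : ℂ} (hz : z ∈ OmC a e) (k : ℤ) (hk : k ≠ 0) :
    e < ‖z - (k : ℂ) * (Real.pi : ℂ)‖ := by
  have h1 : Metric.infDist z polesC ≤ dist z ((k : ℂ) * (Real.pi : ℂ)) :=
    Metric.infDist_le_dist_of_mem ⟨k, hk, rfl⟩
  rw [Complex.dist_eq] at h1
  exact lt_of_lt_of_le hz.2 h1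

lemma sin_ne_zero_OmC {a e : ℝ} (he : 0 < e) {z : ℂ} (hz : z ∈ OmC a e) (hz0 : z ≠ 0) :
    Complex.sin z ≠ 0 := by
  intro h
  obtain ⟨k, hk⟩ := Complex.sin_eq_zero_iff.mp h
  rcases eq_or_ne k 0 with rfl | hk0
  · simp at hk; exact hz0 hk
  · have := mem_OmC_dist hz k hk0
    rw [hk] at this
    simp at this
    linarith

lemma zero_mem_OmC {a e : ℝ} (ha : 0 < a) (he : e < Real.pi) : (0 : ℂ) ∈ OmC a e := by
  constructor
  · simpa using ha
  · refine lt_of_lt_of_le he (le_infDist_polesC 0 Real.pi fun k hk => ?_)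
    simpa using abs_pole hk

lemma mem_OmC_of_dist {a e η : ℝ} {z w : ℂ} (hz : z ∈ OmC a e) (hw : dist w z ≤ η) :
    w ∈ OmC (a + η) (e - η) := by
  constructor
  · have h1 : |(w - z).im| ≤ ‖w - z‖ := Complex.abs_im_le_norm _
    rw [Complex.sub_im] at h1
    rw [Complex.dist_eq] at hw
    have h2 : |w.im| ≤ |z.im| + |w.im - z.im| := by
      calc |w.im| = |z.im + (w.im - z.im)| := by ring_nf
        _ ≤ |z.im| + |w.im - z.im| := abs_add_le _ _
    have := hz.1
    linarith
  · have h1 : Metric.infDist z polesC ≤ Metric.infDist w polesC + dist z w :=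
      Metric.infDist_le_infDist_add_dist
    rw [dist_comm] at h1
    have := hz.2
    linarith

lemma deriv_neg_eq {F : ℂ → ℂ} (hF : ∀ z, F (-z) = F z) (z : ℂ) :
    deriv F (-z) = -deriv F z := by
  have h : deriv (fun x => F (-x)) z = -deriv F (-z) := deriv_comp_neg F z
  have h2 : (fun x => F (-x)) = F := funext hF
  rw [h2] at h
  linear_combination h

lemma deriv_zero_of_even {F : ℂ → ℂ} (hF : ∀ z, F (-z) = F z) : deriv F 0 = 0 := by
  have h := deriv_neg_eq hF 0
  rw [neg_zero] at h
  linear_combination h / 2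

lemma abs_sin_sq (z : ℂ) :
    ‖Complex.sin z‖ ^ 2 = Real.sin z.re ^ 2 + Real.sinh z.im ^ 2 := by
  set x := z.re
  set y := z.im
  have hz : z = (x : ℂ) + (y : ℂ) * I := (Complex.re_add_im z).symm
  have hsin : Complex.sin z =
      ((Real.sin x * Real.cosh y : ℝ) : ℂ) + ((Real.cos x * Real.sinh y : ℝ) : ℂ) * I := by
    rw [hz, Complex.sin_add, Complex.sin_mul_I, Complex.cos_mul_I]
    push_cast
    ring
  rw [hsin, Complex.sq_norm, Complex.normSq_add_mul_I]
  nlinarith [Real.sin_sq_add_cos_sq x, Real.cosh_sq y]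

lemma sin_lower {e : ℝ} (he : 0 < e) (he1 : e ≤ 1) {z : ℂ}
    (hz : e / 2 ≤ ‖z‖)
    (hk : ∀ k : ℤ, k ≠ 0 → e < ‖z - (k : ℂ) * (Real.pi : ℂ)‖) :
    min (Real.sin (e / 4)) (Real.sinh (e / 4)) ≤ ‖Complex.sin z‖ := by
  set x := z.re with hx
  set y := z.im with hy
  have habs := abs_sin_sq z
  rw [← hx, ← hy] at habs
  have hsz : (0 : ℝ) ≤ ‖Complex.sin z‖ := norm_nonneg _
  by_cases hycase : e / 4 ≤ |y|
  · -- sinh branch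
    have h1 : Real.sinh (e / 4) ≤ Real.sinh |y| := Real.sinh_le_sinh.mpr hycase
    have h2 : Real.sinh |y| = |Real.sinh y| := (Real.abs_sinh y).symm
    have h3 : 0 ≤ Real.sinh (e / 4) := Real.sinh_nonneg_iff.mpr (by linarith)
    have h4 : Real.sinh (e / 4) ^ 2 ≤ Real.sinh y ^ 2 := by
      rw [← _root_.sq_abs (Real.sinh y)]
      nlinarith [abs_nonneg (Real.sinh y)]
    have h5 : Real.sinh (e / 4) ≤ ‖Complex.sin z‖ := by
      nlinarith [sq_nonneg (Real.sin x)]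
    exact le_trans (min_le_right _ _) h5
  · push_neg at hycase
    set k₀ : ℤ := round (x / Real.pi) with hk₀
    set u : ℝ := x - k₀ * Real.pi with hu
    have hπ := Real.pi_pos
    have hu2 : |u| ≤ Real.pi / 2 := by
      have h := abs_sub_round (x / Real.pi)
      have h2 : u = (x / Real.pi - k₀) * Real.pi := by
        rw [hu]; field_simp
      rw [h2, abs_mul, abs_of_pos hπ]
      nlinarith
    have hyabs : |y| ≤ ‖z‖ := Complex.abs_im_le_norm z
    have hul : e / 4 ≤ |u| := by
      by_cases hk0 : k₀ = 0
      · have hxabs : ‖z‖ ≤ |x| + |y| := Complex.norm_le_abs_re_add_abs_im z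
        rw [hu, hk0]
        simp only [Int.cast_zero, zero_mul, sub_zero]
        linarith
      · have h1 : e < ‖z - (k₀ : ℂ) * (Real.pi : ℂ)‖ := hk k₀ hk0
        have h2 : ‖z - (k₀ : ℂ) * (Real.pi : ℂ)‖ ≤ |u| + |y| := by
          have h3 := Complex.norm_le_abs_re_add_abs_im (z - (k₀ : ℂ) * (Real.pi : ℂ))
          have h4 : (z - (k₀ : ℂ) * (Real.pi : ℂ)).re = u := by
            rw [hu]
            have : ((k₀ : ℂ) * (Real.pi : ℂ)) = (((k₀ : ℝ) * Real.pi : ℝ) : ℂ) := by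
              push_cast; ring
            rw [Complex.sub_re, this, Complex.ofReal_re]
          have h5 : (z - (k₀ : ℂ) * (Real.pi : ℂ)).im = y := by
            have : ((k₀ : ℂ) * (Real.pi : ℂ)) = (((k₀ : ℝ) * Real.pi : ℝ) : ℂ) := by
              push_cast; ring
            rw [Complex.sub_im, this, Complex.ofReal_im, sub_zero, hy]
          rw [h4, h5] at h3
          exact h3
        linarith
    have hsx : Real.sin (e / 4) ≤ |Real.sin x| := by
      have hxu : x = u + k₀ * Real.pi := by rw [hu]; ring
      rw [hxu, Real.sin_add_int_mul_pi, abs_mul]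
      have hone : |((-1 : ℝ)) ^ k₀| = 1 := by
        rcases Int.even_or_odd k₀ with hpar | hpar
        · rw [hpar.neg_one_zpow]; norm_num
        · rw [hpar.neg_one_zpow]; norm_num
      rw [hone, one_mul]
      have habs_sin : |Real.sin u| = Real.sin |u| := by
        rcases abs_cases u with ⟨h1, h2⟩ | ⟨h1, h2⟩
        · rw [h1, _root_.abs_of_nonneg (Real.sin_nonneg_of_nonneg_of_le_pi h2 (by linarith))]
        · rw [h1, Real.sin_neg]
          rw [_root_.abs_of_nonpos (Real.sin_nonpos_of_nonpos_of_neg_pi_le (by linarith) (by linarith))]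
      rw [habs_sin]
      have hmem1 : e / 4 ∈ Icc (-(Real.pi / 2)) (Real.pi / 2) :=
        ⟨by linarith, by linarith⟩
      have hmem2 : |u| ∈ Icc (-(Real.pi / 2)) (Real.pi / 2) :=
        ⟨by linarith [abs_nonneg u], hu2⟩
      exact Real.strictMonoOn_sin.monotoneOn hmem1 hmem2 hul
    have hsq : Real.sin x ^ 2 ≤ ‖Complex.sin z‖ ^ 2 := by
      rw [habs]; nlinarith [sq_nonneg (Real.sinh y)]
    have hfin : |Real.sin x| ≤ ‖Complex.sin z‖ := by
      rw [← _root_.sq_abs (Real.sin x)] at hsq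
      nlinarith [abs_nonneg (Real.sin x)]
    exact le_trans (min_le_left _ _) (le_trans hsx hfin)

lemma exp_re_eq (t : ℝ) (ht : 0 < t) (z : ℂ) :
    ‖Complex.exp (-(z ^ 2) / (4 * (t : ℂ)))‖
      = Real.exp (-((z ^ 2).re) / (4 * t)) := by
  rw [Complex.norm_exp]
  congr 1
  have h4 : (4 * (t : ℂ)) = (((4 * t : ℝ)) : ℂ) := by push_cast; ring
  rw [h4, Complex.div_ofReal_re, Complex.neg_re]

lemma claim (t : ℝ) (ht : 0 < t) :
    ∀ m : ℕ, ∀ a e : ℝ, 0 < e → e ≤ 1 → e < a → a < Real.pi →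
    ∃ C : ℝ, 0 < C ∧ ∃ F : ℂ → ℂ,
      (∀ z, F (-z) = F z) ∧
      DifferentiableOn ℂ F (OmC a e) ∧
      (∀ z ∈ OmC a e, z ≠ 0 →
        F z = (LsphC^[m] (fun w => Complex.exp (-(w ^ 2) / (4 * (t : ℂ))))) z) ∧
      (∀ z ∈ OmC a e, ‖F z‖
          ≤ C * (1 + ‖z‖) ^ m * Real.exp (-((z ^ 2).re) / (4 * t))) := by
  intro m
  induction m with
  | zero =>
    intro a e he0 he1 hea haπ
    refine ⟨1, one_pos, fun w => Complex.exp (-(w ^ 2) / (4 * (t : ℂ))), ?_, ?_, ?_, ?_⟩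
    · intro z; simp only [neg_sq]
    · exact (Differentiable.cexp (((differentiable_pow 2).neg).div_const _)).differentiableOn
    · intro z _ _; rw [Function.iterate_zero, id]
    · intro z _
      rw [exp_re_eq t ht z, pow_zero, mul_one, one_mul]
  | succ m ih =>
    intro a e he0 he1 hea haπ
    have hπ := Real.pi_pos
    have hπ3 := Real.pi_gt_three
    set η : ℝ := min ((Real.pi - a) / 2) (e / 2) with hηdef
    have hη0 : 0 < η := lt_min (by linarith) (by linarith)
    have hη1 : η ≤ e / 2 := min_le_right _ _
    have hη2 : η ≤ (Real.pi - a) / 2 := min_le_left _ _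
    obtain ⟨C, hC0, F, hFeven, hFdiff, hFeq, hFbd⟩ :=
      ih (a + η) (e - η) (by linarith) (by linarith) (by linarith) (by linarith)
    have hsub : OmC a e ⊆ OmC (a + η) (e - η) := fun z hz =>
      mem_OmC_of_dist hz (by rw [dist_self]; exact hη0.le)
    have hopen' : IsOpen (OmC (a + η) (e - η)) := isOpen_OmC _ _
    have h0mem : (0 : ℂ) ∈ OmC (a + η) (e - η) := zero_mem_OmC (by linarith) (by linarith)
    have hF0 : deriv F 0 = 0 := deriv_zero_of_even hFeven
    have hdF : DifferentiableOn ℂ (deriv F) (OmC (a + η) (e - η)) :=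
      ((hFdiff.analyticOnNhd hopen').deriv).differentiableOn
    set F' : ℂ → ℂ := fun z =>
      -(1 / (2 * (Real.pi : ℂ))) * (dslope (deriv F) 0 z / dslope Complex.sin 0 z) with hF'def
    -- dslope facts
    have hds1 : DifferentiableOn ℂ (dslope (deriv F) 0) (OmC (a + η) (e - η)) :=
      (Complex.differentiableOn_dslope (hopen'.mem_nhds h0mem)).mpr hdF
    have hds2 : Differentiable ℂ (dslope Complex.sin 0) := by
      rw [← differentiableOn_univ]
      exact (Complex.differentiableOn_dslope (Filter.univ_mem)).mpr
        Complex.differentiable_sin.differentiableOn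
    have hdsin_ne : ∀ z ∈ OmC a e, dslope Complex.sin 0 z ≠ 0 := by
      intro z hz
      rcases eq_or_ne z 0 with rfl | hz0
      · rw [dslope_same]
        rw [Complex.deriv_sin, Complex.cos_zero]
        exact one_ne_zero
      · rw [dslope_of_ne _ hz0, slope_def_field, Complex.sin_zero, sub_zero, sub_zero]
        exact div_ne_zero (sin_ne_zero_OmC he0 hz hz0) hz0
    have hF'diff : DifferentiableOn ℂ F' (OmC a e) := by
      apply DifferentiableOn.const_mul
      exact ((hds1.mono hsub).div (hds2.differentiableOn.mono (subset_univ _)) hdsin_ne)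
    have hF'even : ∀ z, F' (-z) = F' z := by
      intro z
      rcases eq_or_ne z 0 with rfl | hz0
      · rw [neg_zero]
      · have e1 : dslope (deriv F) 0 (-z) = dslope (deriv F) 0 z := by
          rw [dslope_of_ne _ (neg_ne_zero.mpr hz0), dslope_of_ne _ hz0,
            slope_def_field, slope_def_field, deriv_neg_eq hFeven, hF0]
          simp only [sub_zero, neg_sub, neg_zero]
          rw [neg_div_neg_eq]
        have e2 : dslope Complex.sin 0 (-z) = dslope Complex.sin 0 z := by
          rw [dslope_of_ne _ (neg_ne_zero.mpr hz0), dslope_of_ne _ hz0,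
            slope_def_field, slope_def_field, Complex.sin_neg, Complex.sin_zero]
          simp only [sub_zero, neg_sub, neg_zero]
          rw [neg_div_neg_eq]
        simp only [hF'def]
        rw [e1, e2]
    -- identification with the iterate
    have hF'eq : ∀ z ∈ OmC a e, z ≠ 0 →
        F' z = (LsphC^[m + 1] (fun w => Complex.exp (-(w ^ 2) / (4 * (t : ℂ))))) z := by
      intro z hz hz0
      have hzΩ' : z ∈ OmC (a + η) (e - η) := hsub hz
      have hsin : Complex.sin z ≠ 0 := sin_ne_zero_OmC he0 hz hz0
      have hev : F =ᶠ[nhds z]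
          (LsphC^[m] (fun w => Complex.exp (-(w ^ 2) / (4 * (t : ℂ))))) := by
        have hmem : (OmC (a + η) (e - η) ∩ {(0 : ℂ)}ᶜ) ∈ nhds z :=
          Filter.inter_mem (hopen'.mem_nhds hzΩ') (isOpen_compl_singleton.mem_nhds hz0)
        filter_upwards [hmem] with w hw using hFeq w hw.1 hw.2
      have hder : deriv F z
          = deriv (LsphC^[m] (fun w => Complex.exp (-(w ^ 2) / (4 * (t : ℂ))))) z :=
        hev.deriv_eq
      rw [Function.iterate_succ_apply']
      show F' z = -(1 / (2 * (Real.pi : ℂ)))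
          * deriv (LsphC^[m] (fun w => Complex.exp (-(w ^ 2) / (4 * (t : ℂ))))) z
          / Complex.sin z
      rw [← hder]
      simp only [hF'def]
      rw [dslope_of_ne _ hz0, dslope_of_ne _ hz0, slope_def_field, slope_def_field,
        hF0, Complex.sin_zero]
      simp only [sub_zero]
      rw [div_div_div_cancel_right₀ hz0, mul_div_assoc]
    -- sin lower bound constant
    set s₀ : ℝ := min (Real.sin (e / 4)) (Real.sinh (e / 4)) with hs₀def
    have hs₀ : 0 < s₀ :=
      lt_min (Real.sin_pos_of_pos_of_lt_pi (by linarith) (by linarith))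
        (Real.sinh_pos_iff.mpr (by linarith))
    set K : ℝ := Real.exp ((η * (2 + η)) / (4 * t)) with hKdef
    have hK0 : 0 < K := Real.exp_pos _
    set C₁ : ℝ := C * (1 + η) ^ m * K / (2 * Real.pi * s₀ * η) with hC₁def
    have hC₁ : 0 < C₁ := by positivity
    -- main bound, case |z| ≥ e/2
    have hcase1 : ∀ z ∈ OmC a e, e / 2 ≤ ‖z‖ →
        ‖F' z‖
          ≤ C₁ * (1 + ‖z‖) ^ (m + 1) * Real.exp (-((z ^ 2).re) / (4 * t)) := by
      intro z hz hze
      have habsz : (0 : ℝ) ≤ ‖z‖ := norm_nonneg _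
      set s : ℝ := ‖z‖ with hsdef
      set r : ℝ := η / (1 + s) with hrdef
      have hr0 : 0 < r := by positivity
      have hr1s : r * (1 + s) = η := by
        rw [hrdef]; field_simp
      have hrη : r ≤ η := by nlinarith
      have hball : Metric.closedBall z r ⊆ OmC (a + η) (e - η) := fun w hw =>
        mem_OmC_of_dist hz (le_trans (mem_closedBall.mp hw) hrη)
      have hdiffcl : DiffContOnCl ℂ F (Metric.ball z r) := by
        apply DifferentiableOn.diffContOnCl
        rw [closure_ball z hr0.ne']
        exact hFdiff.mono hball
      set E : ℝ := Real.exp (-((z ^ 2).re) / (4 * t)) with hEdef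
      have hE0 : 0 < E := Real.exp_pos _
      set B : ℝ := C * ((1 + η) * (1 + s)) ^ m * (K * E) with hBdef
      have hsphere : ∀ w ∈ Metric.sphere z r, ‖F w‖ ≤ B := by
        intro w hw
        have hwz : dist w z = r := mem_sphere.mp hw
        have hwΩ' : w ∈ OmC (a + η) (e - η) :=
          hball (sphere_subset_closedBall hw)
        have h1 := hFbd w hwΩ'
        have h2 : ‖w‖ ≤ s + r := by
          have : ‖w - z‖ = r := by rw [← Complex.dist_eq]; exact hwz
          calc ‖w‖ = ‖z + (w - z)‖ := by ring_nf
            _ ≤ ‖z‖ + ‖w - z‖ := norm_add_le _ _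
            _ = s + r := by rw [this]
        have h3 : (1 + ‖w‖) ≤ (1 + η) * (1 + s) := by nlinarith
        have h4 : ‖w ^ 2 - z ^ 2‖ ≤ η * (2 + η) := by
          have hfac : w ^ 2 - z ^ 2 = (w - z) * (w + z) := by ring
          rw [hfac, norm_mul]
          have ha : ‖w - z‖ = r := by rw [← Complex.dist_eq]; exact hwz
          have hb : ‖w + z‖ ≤ 2 * s + r := by
            calc ‖w + z‖ = ‖(w - z) + 2 * z‖ := by ring_nf
              _ ≤ ‖w - z‖ + ‖2 * z‖ := norm_add_le _ _
              _ = r + 2 * s := by rw [ha, norm_mul, Complex.norm_two]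
              _ = 2 * s + r := by ring
          rw [ha]
          have hkey : η * (2 + η) - r * (2 * s + r) = r * (2 + r * (s ^ 2 + 2 * s)) := by
            rw [← hr1s]; ring
          have hpos : (0 : ℝ) ≤ 2 + r * (s ^ 2 + 2 * s) := by positivity
          have habswz : (0:ℝ) ≤ ‖w + z‖ := norm_nonneg _
          calc r * ‖w + z‖ ≤ r * (2 * s + r) := by nlinarith [hr0.le]
            _ ≤ η * (2 + η) := by nlinarith [mul_nonneg hr0.le hpos]
        have h5 : (z ^ 2).re - η * (2 + η) ≤ (w ^ 2).re := by
          have h6 : |(w ^ 2 - z ^ 2).re| ≤ ‖w ^ 2 - z ^ 2‖ :=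
            Complex.abs_re_le_norm _
          rw [Complex.sub_re] at h6
          have := abs_le.mp (le_trans h6 h4)
          linarith [this.1]
        have h7 : Real.exp (-((w ^ 2).re) / (4 * t)) ≤ K * E := by
          rw [hKdef, hEdef, ← Real.exp_add]
          apply Real.exp_le_exp.mpr
          rw [← add_div]
          apply (div_le_div_iff_of_pos_right (by positivity)).mpr
          linarith
        have h8 : ‖F w‖
            ≤ C * ((1 + η) * (1 + s)) ^ m * (K * E) := by
          calc ‖F w‖
              ≤ C * (1 + ‖w‖) ^ m * Real.exp (-((w ^ 2).re) / (4 * t)) := h1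
            _ ≤ C * ((1 + η) * (1 + s)) ^ m * (K * E) := by
                apply mul_le_mul
                · apply mul_le_mul le_rfl
                    (pow_le_pow_left₀ (by positivity) h3 m) (by positivity) hC0.le
                · exact h7
                · positivity
                · positivity
        exact h8
      have hcauchy : ‖deriv F z‖ ≤ B / r :=
        Complex.norm_deriv_le_of_forall_mem_sphere_norm_le hr0 hdiffcl hsphere
      have hsinlow : s₀ ≤ ‖Complex.sin z‖ :=
        sin_lower he0 he1 hze (fun k hk => mem_OmC_dist hz k hk)
      have hz0 : z ≠ 0 := by
        intro h
        have hs0 : s = 0 := by rw [hsdef, h, norm_zero]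
        linarith
      have hsz : Complex.sin z ≠ 0 := sin_ne_zero_OmC he0 hz hz0
      have hF'z : F' z = -(1 / (2 * (Real.pi : ℂ))) * (deriv F z / Complex.sin z) := by
        simp only [hF'def]
        rw [dslope_of_ne _ hz0, dslope_of_ne _ hz0, slope_def_field, slope_def_field,
          hF0, Complex.sin_zero]
        simp only [sub_zero]
        rw [div_div_div_cancel_right₀ hz0]
      have habsc : ‖-(1 / (2 * (Real.pi : ℂ)))‖ = 1 / (2 * Real.pi) := by
        rw [norm_neg, norm_div, norm_one, norm_mul, Complex.norm_two,
          Complex.norm_real, Real.norm_eq_abs, abs_of_pos hπ]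
      have hstep : ‖F' z‖
          ≤ (1 / (2 * Real.pi)) * ((B / r) / s₀) := by
        rw [hF'z, norm_mul, habsc, norm_div]
        apply mul_le_mul_of_nonneg_left _ (by positivity)
        apply div_le_div₀ (by positivity) _ hs₀ hsinlow
        exact hcauchy
      refine le_trans hstep (le_of_eq ?_)
      have hBr : B / r = B * (1 + s) / η := by
        rw [← hr1s]
        field_simp
      rw [hBr, hBdef, hC₁def, mul_pow, pow_succ]
      have hπne : Real.pi ≠ 0 := hπ.ne'
      have hs₀ne : s₀ ≠ 0 := hs₀.ne'
      have hηne : η ≠ 0 := hη0.ne'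
      field_simp
    -- case |z| < e/2
    have hball0 : Metric.closedBall (0 : ℂ) (e / 2) ⊆ OmC a e := by
      intro w hw
      have h2 : ‖w‖ ≤ e / 2 := by
        have := mem_closedBall.mp hw
        rwa [Complex.dist_eq, sub_zero] at this
      constructor
      · have h1 : |w.im| ≤ ‖w‖ := Complex.abs_im_le_norm w
        linarith
      · have h3 : (2 : ℝ) ≤ Metric.infDist w polesC := by
          apply le_infDist_polesC w 2
          intro k hk
          have h4 : Real.pi ≤ ‖(k : ℂ) * (Real.pi : ℂ)‖ := abs_pole hk
          have h5 : ‖(k : ℂ) * (Real.pi : ℂ)‖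
              ≤ ‖w - (k : ℂ) * (Real.pi : ℂ)‖ + ‖w‖ := by
            calc ‖(k : ℂ) * (Real.pi : ℂ)‖
                = ‖((k : ℂ) * (Real.pi : ℂ) - w) + w‖ := by ring_nf
              _ ≤ ‖(k : ℂ) * (Real.pi : ℂ) - w‖ + ‖w‖ :=
                  norm_add_le _ _
              _ = ‖w - (k : ℂ) * (Real.pi : ℂ)‖ + ‖w‖ := by
                  rw [norm_sub_rev]
          linarith
        linarith
    obtain ⟨M, hM⟩ := (isCompact_closedBall (0 : ℂ) (e / 2)).exists_bound_of_continuousOn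
        (hF'diff.continuousOn.mono hball0)
    set C₂ : ℝ := (max M 0 + 1) * Real.exp ((e / 2) ^ 2 / (4 * t)) with hC₂def
    have hC₂ : 0 < C₂ := by positivity
    have hcase2 : ∀ z ∈ OmC a e, ‖z‖ < e / 2 →
        ‖F' z‖
          ≤ C₂ * (1 + ‖z‖) ^ (m + 1) * Real.exp (-((z ^ 2).re) / (4 * t)) := by
      intro z hz hze
      have habsz : (0 : ℝ) ≤ ‖z‖ := norm_nonneg _
      have hzball : z ∈ Metric.closedBall (0 : ℂ) (e / 2) := by
        rw [mem_closedBall, Complex.dist_eq, sub_zero]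
        exact hze.le
      have h1 : ‖F' z‖ ≤ max M 0 := by
        have hh := hM z hzball
        exact le_trans hh (le_max_left _ _)
      have h2 : (z ^ 2).re ≤ (e / 2) ^ 2 := by
        have h3 : (z ^ 2).re ≤ ‖z ^ 2‖ := Complex.re_le_norm _
        rw [norm_pow] at h3
        nlinarith
      have h4 : (1 : ℝ) ≤ Real.exp ((e / 2) ^ 2 / (4 * t))
          * Real.exp (-((z ^ 2).re) / (4 * t)) := by
        rw [← Real.exp_add, ← Real.exp_zero]
        apply Real.exp_le_exp.mpr
        rw [← add_div]
        apply div_nonneg (by linarith) (by positivity)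
      have h5 : (1 : ℝ) ≤ (1 + ‖z‖) ^ (m + 1) := one_le_pow₀ (by linarith)
      calc ‖F' z‖ ≤ max M 0 := h1
        _ ≤ (max M 0 + 1) * (Real.exp ((e / 2) ^ 2 / (4 * t))
              * Real.exp (-((z ^ 2).re) / (4 * t))) := by
            nlinarith [le_max_right M 0, le_max_left M 0]
        _ ≤ ((max M 0 + 1) * (Real.exp ((e / 2) ^ 2 / (4 * t))
              * Real.exp (-((z ^ 2).re) / (4 * t)))) * (1 + ‖z‖) ^ (m + 1) :=
            le_mul_of_one_le_right (by positivity) h5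
        _ = C₂ * (1 + ‖z‖) ^ (m + 1) * Real.exp (-((z ^ 2).re) / (4 * t)) := by
            rw [hC₂def]; ring
    refine ⟨C₁ + C₂, by positivity, F', hF'even, hF'diff, hF'eq, ?_⟩
    intro z hz
    rcases le_or_gt (e / 2) (‖z‖) with h | h
    · refine le_trans (hcase1 z hz h) ?_
      apply mul_le_mul_of_nonneg_right _ (Real.exp_pos _).le
      apply mul_le_mul_of_nonneg_right (by linarith) (by positivity)
    · refine le_trans (hcase2 z hz h) ?_
      apply mul_le_mul_of_nonneg_right _ (Real.exp_pos _).le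
      apply mul_le_mul_of_nonneg_right (by linarith) (by positivity)
end Stmt6Aux

/-- Gaussian bound for `L̃^m` applied to `G(z) = e^{-z²/(4t)}` on the region
`S_{ε,A}`. -/
theorem stmt_6 (t : ℝ) (ht : 0 < t) (m : ℕ) (ε A : ℝ)
    (hε : 0 < ε) (hεA : ε < A) (hA : A < Real.pi) :
    ∃ C : ℝ, 0 < C ∧ ∀ z : ℂ, 0 < z.re → |z.im| < A →
      (∀ k : ℕ, 0 < k → ‖z - (k : ℂ) * (Real.pi : ℂ)‖ > ε) →
      ‖LsphC^[m] (fun w => Complex.exp (-(w ^ 2) / (4 * (t : ℂ)))) z‖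
        ≤ C * (1 + ‖z‖) ^ m * Real.exp (-((z ^ 2).re) / (4 * t)) := by
  have hπ := Real.pi_pos
  have hπ3 := Real.pi_gt_three
  have he0 : 0 < min ε 1 := lt_min hε one_pos
  have he1 : min ε 1 ≤ 1 := min_le_right _ _
  have heε : min ε 1 ≤ ε := min_le_left _ _
  obtain ⟨C, hC0, F, hFe, hFd, hFeq, hFbd⟩ :=
    Stmt6Aux.claim t ht m A (min ε 1 / 2) (by linarith) (by linarith)
      (by linarith) hA
  refine ⟨C, hC0, ?_⟩
  intro z hre him hk
  have hz0 : z ≠ 0 := by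
    intro h
    rw [h] at hre
    simp at hre
  have hzmem : z ∈ Stmt6Aux.OmC A (min ε 1 / 2) := by
    refine ⟨him, ?_⟩
    have hinf : min ε 1 ≤ Metric.infDist z Stmt6Aux.polesC := by
      apply Stmt6Aux.le_infDist_polesC
      intro k hk0
      rcases lt_or_gt_of_ne hk0 with hneg | hpos
      · have h1 : |(z - (k : ℂ) * (Real.pi : ℂ)).re|
            ≤ ‖z - (k : ℂ) * (Real.pi : ℂ)‖ := Complex.abs_re_le_norm _
        have h2 : (z - (k : ℂ) * (Real.pi : ℂ)).re = z.re - k * Real.pi := by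
          have hcast : ((k : ℂ) * (Real.pi : ℂ)) = (((k : ℝ) * Real.pi : ℝ) : ℂ) := by
            push_cast; ring
          rw [Complex.sub_re, hcast, Complex.ofReal_re]
        have hk1 : (k : ℝ) ≤ -1 := by exact_mod_cast (by omega : k ≤ -1)
        have h3 : Real.pi ≤ z.re - k * Real.pi := by nlinarith
        have h4 : z.re - k * Real.pi ≤ ‖z - (k : ℂ) * (Real.pi : ℂ)‖ := by
          rw [← h2]
          exact le_trans (le_abs_self _) h1
        linarith
      · have hk' := hk k.toNat (by omega)
        have hcast : ((k.toNat : ℕ) : ℂ) = (k : ℂ) := by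
          have h := Int.toNat_of_nonneg hpos.le
          exact_mod_cast congrArg (Int.cast : ℤ → ℂ) h
        rw [hcast] at hk'
        linarith
    linarith
  rw [← hFeq z hzmem hz0]
  exact hFbd z hzmem
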